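/- One-step distance estimate near an invariant orthonormal frame (Lemma 4.6, one-step form): Let H be an n×n real symmetric matrix with σ_max(H) ≤ M, let α ≥ 1, and let V be an n×N real matrix with Vᵀ·V = I_N whose column span is H-invariant, i.e. H·V = V·(Vᵀ·H·V). Let U, Ũ, Û, U' be n×N real matrices and s ≥ 0 satisfy Û = U − s·𝒜_Ũ·Ũ, Ũ = (U + Û)/2, and U' = Û − s·H·Û·(I_N − Ûᵀ·Û). Assume σ_max(U) ≤ α and σ_max(Ũ) ≤ α. Then ‖U' − V‖_F ≤ (1 + s·M·α·(α + 1))·‖U − V‖_F + 6·s·α²·M·‖Ũ − V‖_F. -/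

import Mathlib

open Matrix

noncomputable section

/-- The skew-symmetric commutator 𝒜_W = H·W·Wᵀ − W·Wᵀ·H. -/
def commA {n N : ℕ} (H : Matrix (Fin n) (Fin n) ℝ) (W : Matrix (Fin n) (Fin N) ℝ) :
    Matrix (Fin n) (Fin n) ℝ :=
  H * W * Wᵀ - W * Wᵀ * H

/-- Frobenius norm of a real matrix. -/
def frobNorm {m k : ℕ} (A : Matrix (Fin m) (Fin k) ℝ) : ℝ :=
  Real.sqrt (∑ i, ∑ j, (A i j) ^ 2)

/-- Largest singular value (ℓ²-operator norm) of a real matrix. -/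
def sigmaMax {m k : ℕ} (A : Matrix (Fin m) (Fin k) ℝ) : ℝ :=
  ‖LinearMap.toContinuousLinearMap (Matrix.toEuclideanLin A)‖

section Auxiliary

open scoped Matrix.Norms.L2Operator

lemma aux_sigmaMax_nonneg {m k : ℕ} (A : Matrix (Fin m) (Fin k) ℝ) : 0 ≤ sigmaMax A :=
  norm_nonneg _

lemma aux_sigmaMax_mul_le {m k l : ℕ} (A : Matrix (Fin m) (Fin k) ℝ)
    (B : Matrix (Fin k) (Fin l) ℝ) : sigmaMax (A * B) ≤ sigmaMax A * sigmaMax B :=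
  A.l2_opNorm_mul B

lemma aux_sigmaMax_transpose {m k : ℕ} (A : Matrix (Fin m) (Fin k) ℝ) :
    sigmaMax Aᵀ = sigmaMax A := by
  have h : Aᴴ = Aᵀ := by ext i j; simp [conjTranspose_apply]
  rw [← h]; exact A.l2_opNorm_conjTranspose

lemma aux_mulVec_norm_le {m k : ℕ} (A : Matrix (Fin m) (Fin k) ℝ) (v : Fin k → ℝ) :
    Real.sqrt (∑ i, (A *ᵥ v) i ^ 2) ≤ sigmaMax A * Real.sqrt (∑ j, (v j) ^ 2) := by
  have h := A.l2_opNorm_mulVec ((WithLp.equiv 2 (Fin k → ℝ)).symm v)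
  simp [EuclideanSpace.norm_eq, Real.norm_eq_abs, sq_abs] at h; exact h

lemma aux_mulVec_sq_le {m k : ℕ} (A : Matrix (Fin m) (Fin k) ℝ) (v : Fin k → ℝ) :
    ∑ i, (A *ᵥ v) i ^ 2 ≤ sigmaMax A ^ 2 * ∑ j, (v j) ^ 2 := by
  have h := aux_mulVec_norm_le A v
  have h1 : (0:ℝ) ≤ ∑ i, (A *ᵥ v) i ^ 2 := Finset.sum_nonneg fun _ _ => sq_nonneg _
  have h2 : (0:ℝ) ≤ ∑ j, (v j) ^ 2 := Finset.sum_nonneg fun _ _ => sq_nonneg _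
  have h3 := mul_self_le_mul_self (Real.sqrt_nonneg _) h
  rw [Real.mul_self_sqrt h1] at h3
  calc ∑ i, (A *ᵥ v) i ^ 2 ≤ (sigmaMax A * Real.sqrt (∑ j, (v j)^2)) *
        (sigmaMax A * Real.sqrt (∑ j, (v j)^2)) := h3
    _ = sigmaMax A ^ 2 * ∑ j, (v j) ^ 2 := by
        rw [mul_mul_mul_comm, Real.mul_self_sqrt h2]; ring

lemma aux_sigmaMax_le_of_forall {m k : ℕ} (A : Matrix (Fin m) (Fin k) ℝ) (c : ℝ) (hc : 0 ≤ c)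
    (h : ∀ v : Fin k → ℝ, Real.sqrt (∑ i, (A *ᵥ v) i ^ 2) ≤ c * Real.sqrt (∑ j, (v j) ^ 2)) :
    sigmaMax A ≤ c := by
  refine ContinuousLinearMap.opNorm_le_bound _ hc fun x => ?_
  have := h ((WithLp.equiv 2 (Fin k → ℝ)) x)
  simpa [EuclideanSpace.norm_eq, Real.norm_eq_abs, sq_abs] using this

lemma aux_sq_sum_mulVec {m k : ℕ} (X : Matrix (Fin m) (Fin k) ℝ) (v : Fin k → ℝ) :
    ∑ i, (X *ᵥ v) i ^ 2 = ((Xᵀ * X) *ᵥ v) ⬝ᵥ v := by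
  have h1 : ∑ i, (X *ᵥ v) i ^ 2 = (X *ᵥ v) ⬝ᵥ (X *ᵥ v) := by
    simp [dotProduct, sq]
  rw [h1, Matrix.dotProduct_mulVec, ← Matrix.mulVec_transpose, Matrix.mulVec_mulVec]

lemma aux_sigmaMax_isometry {n N : ℕ} (V : Matrix (Fin n) (Fin N) ℝ) (hV : Vᵀ * V = 1) :
    sigmaMax V ≤ 1 := by
  apply aux_sigmaMax_le_of_forall _ _ zero_le_one
  intro v
  rw [aux_sq_sum_mulVec, hV, Matrix.one_mulVec, one_mul]
  apply Real.sqrt_le_sqrt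
  simp [dotProduct, sq]

lemma aux_sigmaMax_le_of_gram_eq {n N : ℕ} (X Y : Matrix (Fin n) (Fin N) ℝ)
    (hXY : Xᵀ * X = Yᵀ * Y) (c : ℝ) (hc : 0 ≤ c) (hY : sigmaMax Y ≤ c) : sigmaMax X ≤ c := by
  apply aux_sigmaMax_le_of_forall _ _ hc
  intro v
  rw [aux_sq_sum_mulVec, hXY, ← aux_sq_sum_mulVec]
  calc Real.sqrt (∑ i, (Y *ᵥ v) i ^ 2) ≤ sigmaMax Y * Real.sqrt (∑ j, (v j) ^ 2) :=
        aux_mulVec_norm_le Y v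
    _ ≤ c * Real.sqrt (∑ j, (v j) ^ 2) :=
        mul_le_mul_of_nonneg_right hY (Real.sqrt_nonneg _)

/-- Embedding of matrices into Euclidean space realizing the Frobenius norm. -/
def embE {m k : ℕ} (A : Matrix (Fin m) (Fin k) ℝ) : EuclideanSpace ℝ (Fin m × Fin k) :=
  (WithLp.equiv 2 _).symm (fun p => A p.1 p.2)

lemma aux_frobNorm_eq {m k : ℕ} (A : Matrix (Fin m) (Fin k) ℝ) : frobNorm A = ‖embE A‖ := by
  rw [frobNorm, EuclideanSpace.norm_eq]
  congr 1
  rw [Fintype.sum_prod_type]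
  simp [embE, Real.norm_eq_abs, sq_abs]

lemma aux_frobNorm_nonneg {m k : ℕ} (A : Matrix (Fin m) (Fin k) ℝ) : 0 ≤ frobNorm A :=
  Real.sqrt_nonneg _

lemma aux_frobNorm_add_le {m k : ℕ} (A B : Matrix (Fin m) (Fin k) ℝ) :
    frobNorm (A + B) ≤ frobNorm A + frobNorm B := by
  rw [aux_frobNorm_eq, aux_frobNorm_eq, aux_frobNorm_eq,
    show embE (A + B) = embE A + embE B from rfl]
  exact norm_add_le _ _

lemma aux_frobNorm_neg {m k : ℕ} (A : Matrix (Fin m) (Fin k) ℝ) : frobNorm (-A) = frobNorm A := by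
  rw [aux_frobNorm_eq, aux_frobNorm_eq, show embE (-A) = -embE A from rfl, norm_neg]

lemma aux_frobNorm_smul {m k : ℕ} (s : ℝ) (A : Matrix (Fin m) (Fin k) ℝ) :
    frobNorm (s • A) = |s| * frobNorm A := by
  rw [aux_frobNorm_eq, aux_frobNorm_eq, show embE (s • A) = s • embE A from rfl, norm_smul,
    Real.norm_eq_abs]

lemma aux_frobNorm_transpose {m k : ℕ} (A : Matrix (Fin m) (Fin k) ℝ) :
    frobNorm Aᵀ = frobNorm A := by
  rw [frobNorm, frobNorm, Finset.sum_comm]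
  simp [transpose_apply]

lemma aux_frobNorm_mul_le_left {m k l : ℕ} (A : Matrix (Fin m) (Fin k) ℝ)
    (B : Matrix (Fin k) (Fin l) ℝ) : frobNorm (A * B) ≤ sigmaMax A * frobNorm B := by
  rw [frobNorm, frobNorm, Finset.sum_comm]
  have key : ∀ j, ∑ i, ((A * B) i j) ^ 2 ≤ sigmaMax A ^ 2 * ∑ i, (B i j) ^ 2 := by
    intro j
    have := aux_mulVec_sq_le A (fun i => B i j)
    simpa [Matrix.mulVec, dotProduct, Matrix.mul_apply] using this
  calc Real.sqrt (∑ j, ∑ i, ((A * B) i j) ^ 2)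
      ≤ Real.sqrt (∑ j, sigmaMax A ^ 2 * ∑ i, (B i j) ^ 2) :=
        Real.sqrt_le_sqrt (Finset.sum_le_sum fun j _ => key j)
    _ = sigmaMax A * Real.sqrt (∑ j, ∑ i, (B i j) ^ 2) := by
        rw [← Finset.mul_sum, Real.sqrt_mul (sq_nonneg _),
          Real.sqrt_sq (aux_sigmaMax_nonneg A)]
    _ = sigmaMax A * Real.sqrt (∑ i, ∑ j, (B i j) ^ 2) := by rw [Finset.sum_comm]

lemma aux_frobNorm_mul_le_right {m k l : ℕ} (A : Matrix (Fin m) (Fin k) ℝ)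
    (B : Matrix (Fin k) (Fin l) ℝ) : frobNorm (A * B) ≤ frobNorm A * sigmaMax B := by
  have h : frobNorm (A * B) = frobNorm ((A * B)ᵀ) := (aux_frobNorm_transpose _).symm
  rw [h, Matrix.transpose_mul]
  calc frobNorm (Bᵀ * Aᵀ) ≤ sigmaMax Bᵀ * frobNorm Aᵀ := aux_frobNorm_mul_le_left _ _
    _ = frobNorm A * sigmaMax B := by
        rw [aux_sigmaMax_transpose, aux_frobNorm_transpose, mul_comm]

lemma aux_frob_bound_left {m k l : ℕ} (A : Matrix (Fin m) (Fin k) ℝ)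
    (B : Matrix (Fin k) (Fin l) ℝ) (a b : ℝ) (ha : sigmaMax A ≤ a) (hb : frobNorm B ≤ b)
    (h0 : 0 ≤ a) : frobNorm (A * B) ≤ a * b :=
  le_trans (aux_frobNorm_mul_le_left A B)
    (mul_le_mul ha hb (aux_frobNorm_nonneg B) h0)

lemma aux_frob_bound_right {m k l : ℕ} (A : Matrix (Fin m) (Fin k) ℝ)
    (B : Matrix (Fin k) (Fin l) ℝ) (a b : ℝ) (ha : frobNorm A ≤ a) (hb : sigmaMax B ≤ b)
    (h0 : 0 ≤ a) : frobNorm (A * B) ≤ a * b :=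
  le_trans (aux_frobNorm_mul_le_right A B)
    (mul_le_mul ha hb (aux_sigmaMax_nonneg B) h0)

lemma aux_sigma_bound_mul {m k l : ℕ} (A : Matrix (Fin m) (Fin k) ℝ)
    (B : Matrix (Fin k) (Fin l) ℝ) (a b : ℝ) (ha : sigmaMax A ≤ a) (hb : sigmaMax B ≤ b)
    (h0 : 0 ≤ a) : sigmaMax (A * B) ≤ a * b :=
  le_trans (aux_sigmaMax_mul_le A B)
    (mul_le_mul ha hb (aux_sigmaMax_nonneg B) h0)

lemma aux_frob4 {m k : ℕ} (X Y Z W : Matrix (Fin m) (Fin k) ℝ) :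
    frobNorm (X + Y - Z - W) ≤ frobNorm X + frobNorm Y + frobNorm Z + frobNorm W := by
  have h : X + Y - Z - W = ((X + Y) + -Z) + -W := by abel
  rw [h]
  calc frobNorm (((X + Y) + -Z) + -W) ≤ frobNorm ((X + Y) + -Z) + frobNorm (-W) :=
        aux_frobNorm_add_le _ _
    _ ≤ (frobNorm (X + Y) + frobNorm (-Z)) + frobNorm (-W) := by
        have := aux_frobNorm_add_le (X + Y) (-Z); linarith
    _ ≤ ((frobNorm X + frobNorm Y) + frobNorm (-Z)) + frobNorm (-W) := by
        have := aux_frobNorm_add_le X Y; linarith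
    _ = frobNorm X + frobNorm Y + frobNorm Z + frobNorm W := by
        rw [aux_frobNorm_neg, aux_frobNorm_neg]

end Auxiliary

set_option maxHeartbeats 1000000 in
/-- One-step distance estimate near an invariant orthonormal frame (Lemma 4.6). -/
theorem one_step_distance_estimate
    {n N : ℕ} (H : Matrix (Fin n) (Fin n) ℝ) (hH : H.IsSymm)
    (M α : ℝ) (hM : sigmaMax H ≤ M) (hα : 1 ≤ α)
    (V : Matrix (Fin n) (Fin N) ℝ) (hV : Vᵀ * V = 1)
    (hinv : H * V = V * (Vᵀ * H * V))
    (U Ut Uhat U' : Matrix (Fin n) (Fin N) ℝ) (s : ℝ) (hs : 0 ≤ s)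
    (hpred : Uhat = U - s • (commA H Ut * Ut))
    (hmid : Ut = (1 / 2 : ℝ) • (U + Uhat))
    (hcorr : U' = Uhat - s • (H * Uhat * (1 - Uhatᵀ * Uhat)))
    (hU : sigmaMax U ≤ α) (hUt : sigmaMax Ut ≤ α) :
    frobNorm (U' - V)
      ≤ (1 + s * M * α * (α + 1)) * frobNorm (U - V) + 6 * s * α ^ 2 * M * frobNorm (Ut - V) := by
  have hHt : Hᵀ = H := hH
  have hM0 : 0 ≤ M := le_trans (aux_sigmaMax_nonneg H) hM
  have hα0 : (0:ℝ) ≤ α := by linarith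
  -- skew-symmetry of the commutator
  have hskew : (commA H Ut)ᵀ = -(commA H Ut) := by
    simp [commA, Matrix.transpose_sub, Matrix.transpose_mul, hHt, Matrix.mul_assoc]
  -- the Gram matrix is preserved by the predictor/midpoint step
  have hgram : Uhatᵀ * Uhat = Uᵀ * U := by
    have hsum : U + Uhat = (2:ℝ) • Ut := by
      rw [hmid, smul_smul]; norm_num
    have hdiff : Uhat - U = (-s) • (commA H Ut * Ut) := by
      rw [hpred, sub_sub_cancel_left, neg_smul]
    have expand : (2:ℝ) • (Uhatᵀ * Uhat - Uᵀ * U)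
        = (Uhat - U)ᵀ * (U + Uhat) + (U + Uhat)ᵀ * (Uhat - U) := by
      simp only [Matrix.transpose_sub, Matrix.transpose_add, Matrix.sub_mul, Matrix.mul_sub,
        Matrix.add_mul, Matrix.mul_add, smul_sub, two_smul]
      abel
    rw [hdiff, hsum] at expand
    have hzero : (2:ℝ) • (Uhatᵀ * Uhat - Uᵀ * U) = 0 := by
      rw [expand]
      simp only [Matrix.transpose_smul, Matrix.transpose_mul, hskew, Matrix.smul_mul,
        Matrix.mul_smul, Matrix.neg_mul, Matrix.mul_neg, smul_smul, smul_neg, Matrix.mul_assoc]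
      module
    rcases smul_eq_zero.mp hzero with h | h
    · norm_num at h
    · exact sub_eq_zero.mp h
  -- operator norm of Uhat
  have hUhat : sigmaMax Uhat ≤ α := aux_sigmaMax_le_of_gram_eq Uhat U hgram α hα0 hU
  -- commutation of H with the projector V Vᵀ
  have hVV : H * V * Vᵀ = V * Vᵀ * H := by
    have hB : (Vᵀ * H * V)ᵀ = Vᵀ * H * V := by
      simp [Matrix.transpose_mul, hHt, Matrix.mul_assoc]
    have h1 : V * Vᵀ * H = (H * V * Vᵀ)ᵀ := by
      simp [Matrix.transpose_mul, hHt, Matrix.mul_assoc]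
    rw [h1, hinv]
    simp [Matrix.transpose_mul, ← Matrix.mul_assoc]
    rw [hHt]
  have hVVUt : H * (V * (Vᵀ * Ut)) = V * (Vᵀ * (H * Ut)) := by
    have h := congrArg (fun X => X * Ut) hVV
    simpa [Matrix.mul_assoc] using h
  -- abbreviations
  set E := U - V with hE
  set Et := Ut - V with hEt
  -- expansion of the predictor drift
  have hP : commA H Ut * Ut
      = H * Et * (Utᵀ * Ut) + (H * V) * (Etᵀ * Ut)
        - Et * (Utᵀ * (H * Ut)) - V * (Etᵀ * (H * Ut)) := by
    simp only [hEt, commA, Matrix.sub_mul, Matrix.add_mul, Matrix.mul_sub, Matrix.mul_add,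
      Matrix.transpose_sub, Matrix.mul_assoc, hVVUt]
    abel
  -- expansion of the corrector drift
  have hQ : H * Uhat * (1 - Uᵀ * U)
      = (H * Uhat) * (Vᵀ * (V - U)) + (H * Uhat) * ((V - U)ᵀ * U) := by
    have hdec : (1 : Matrix (Fin N) (Fin N) ℝ) - Uᵀ * U = Vᵀ * (V - U) + (V - U)ᵀ * U := by
      simp only [Matrix.transpose_sub, Matrix.mul_sub, Matrix.sub_mul, hV]
      abel
    rw [hdec, Matrix.mul_add]
  -- basic norm facts
  have hEtT : frobNorm Etᵀ = frobNorm Et := aux_frobNorm_transpose Et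
  have hVU : frobNorm (V - U) = frobNorm E := by
    rw [show V - U = -(U - V) from by abel, aux_frobNorm_neg, hE]
  have hVUT : frobNorm ((V - U)ᵀ) = frobNorm E := by
    rw [aux_frobNorm_transpose, hVU]
  have hσV : sigmaMax V ≤ 1 := aux_sigmaMax_isometry V hV
  have hσVt : sigmaMax Vᵀ ≤ 1 := by rw [aux_sigmaMax_transpose]; exact hσV
  have hσUtT : sigmaMax Utᵀ ≤ α := by rw [aux_sigmaMax_transpose]; exact hUt
  have hEtnn := aux_frobNorm_nonneg Et
  have hEnn := aux_frobNorm_nonneg E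
  -- bound on the predictor drift
  have bt1 : frobNorm (H * Et * (Utᵀ * Ut)) ≤ (M * frobNorm Et) * (α * α) :=
    aux_frob_bound_right _ _ _ _
      (aux_frob_bound_left _ _ _ _ hM (le_refl _) hM0)
      (aux_sigma_bound_mul _ _ _ _ hσUtT hUt hα0)
      (mul_nonneg hM0 hEtnn)
  have bt2 : frobNorm ((H * V) * (Etᵀ * Ut)) ≤ (M * 1) * (frobNorm Et * α) :=
    aux_frob_bound_left _ _ _ _
      (aux_sigma_bound_mul _ _ _ _ hM hσV hM0)
      (aux_frob_bound_right _ _ _ _ (le_of_eq hEtT) hUt hEtnn)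
      (mul_nonneg hM0 zero_le_one)
  have bt3 : frobNorm (Et * (Utᵀ * (H * Ut))) ≤ frobNorm Et * (α * (M * α)) :=
    aux_frob_bound_right _ _ _ _ (le_refl _)
      (aux_sigma_bound_mul _ _ _ _ hσUtT (aux_sigma_bound_mul _ _ _ _ hM hUt hM0) hα0)
      hEtnn
  have bt4 : frobNorm (V * (Etᵀ * (H * Ut))) ≤ 1 * (frobNorm Et * (M * α)) :=
    aux_frob_bound_left _ _ _ _ hσV
      (aux_frob_bound_right _ _ _ _ (le_of_eq hEtT)
        (aux_sigma_bound_mul _ _ _ _ hM hUt hM0) hEtnn)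
      zero_le_one
  have bP : frobNorm (commA H Ut * Ut) ≤ 2 * M * α * (α + 1) * frobNorm Et := by
    rw [hP]
    have h4 := aux_frob4 (H * Et * (Utᵀ * Ut)) ((H * V) * (Etᵀ * Ut))
      (Et * (Utᵀ * (H * Ut))) (V * (Etᵀ * (H * Ut)))
    have hr : (M * frobNorm Et) * (α * α) + (M * 1) * (frobNorm Et * α)
        + frobNorm Et * (α * (M * α)) + 1 * (frobNorm Et * (M * α))
        = 2 * M * α * (α + 1) * frobNorm Et := by ring
    linarith [h4, bt1, bt2, bt3, bt4]
  -- bound on the corrector drift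
  have bq1 : frobNorm ((H * Uhat) * (Vᵀ * (V - U))) ≤ (M * α) * (1 * frobNorm E) := by
    refine aux_frob_bound_left _ _ _ _
      (aux_sigma_bound_mul _ _ _ _ hM hUhat hM0) ?_ (mul_nonneg hM0 hα0)
    have := aux_frob_bound_left Vᵀ (V - U) 1 (frobNorm (V - U)) hσVt (le_refl _) zero_le_one
    rw [hVU] at this; exact this
  have bq2 : frobNorm ((H * Uhat) * ((V - U)ᵀ * U)) ≤ (M * α) * (frobNorm E * α) := by
    refine aux_frob_bound_left _ _ _ _
      (aux_sigma_bound_mul _ _ _ _ hM hUhat hM0) ?_ (mul_nonneg hM0 hα0)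
    exact aux_frob_bound_right _ _ _ _ (le_of_eq hVUT) hU hEnn
  have bQ : frobNorm (H * Uhat * (1 - Uᵀ * U)) ≤ M * α * (α + 1) * frobNorm E := by
    rw [hQ]
    have h2 := aux_frobNorm_add_le ((H * Uhat) * (Vᵀ * (V - U))) ((H * Uhat) * ((V - U)ᵀ * U))
    have hr : (M * α) * (1 * frobNorm E) + (M * α) * (frobNorm E * α)
        = M * α * (α + 1) * frobNorm E := by ring
    linarith [h2, bq1, bq2]
  -- assemble the one-step estimate
  rw [hgram] at hcorr
  have hsplit : U' - V = E + -(s • (commA H Ut * Ut)) + -(s • (H * Uhat * (1 - Uᵀ * U))) := by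
    rw [hcorr, hE]
    nth_rewrite 1 [hpred]
    abel
  have hmain : frobNorm (U' - V)
      ≤ frobNorm E + s * frobNorm (commA H Ut * Ut)
        + s * frobNorm (H * Uhat * (1 - Uᵀ * U)) := by
    rw [hsplit]
    calc frobNorm (E + -(s • (commA H Ut * Ut)) + -(s • (H * Uhat * (1 - Uᵀ * U))))
        ≤ frobNorm (E + -(s • (commA H Ut * Ut)))
          + frobNorm (-(s • (H * Uhat * (1 - Uᵀ * U)))) := aux_frobNorm_add_le _ _
      _ ≤ frobNorm E + frobNorm (-(s • (commA H Ut * Ut)))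
          + frobNorm (-(s • (H * Uhat * (1 - Uᵀ * U)))) := by
          have := aux_frobNorm_add_le E (-(s • (commA H Ut * Ut))); linarith
      _ = frobNorm E + s * frobNorm (commA H Ut * Ut)
          + s * frobNorm (H * Uhat * (1 - Uᵀ * U)) := by
          rw [aux_frobNorm_neg, aux_frobNorm_neg, aux_frobNorm_smul, aux_frobNorm_smul,
            abs_of_nonneg hs]
  -- final arithmetic
  have hgap : (0:ℝ) ≤ s * M * frobNorm Et * (4 * α ^ 2 - 2 * α) := by
    have h1 : (0:ℝ) ≤ 4 * α ^ 2 - 2 * α := by nlinarith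
    exact mul_nonneg (mul_nonneg (mul_nonneg hs hM0) hEtnn) h1
  have h2 : s * frobNorm (commA H Ut * Ut) ≤ s * (2 * M * α * (α + 1) * frobNorm Et) :=
    mul_le_mul_of_nonneg_left bP hs
  have h3 : s * frobNorm (H * Uhat * (1 - Uᵀ * U)) ≤ s * (M * α * (α + 1) * frobNorm E) :=
    mul_le_mul_of_nonneg_left bQ hs
  have hgoal : frobNorm (U' - V)
      ≤ frobNorm E + s * (2 * M * α * (α + 1) * frobNorm Et)
        + s * (M * α * (α + 1) * frobNorm E) := by linarith
  have hr1 : (1 + s * M * α * (α + 1)) * frobNorm E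
      = frobNorm E + s * (M * α * (α + 1) * frobNorm E) := by ring
  have hr2 : 6 * s * α ^ 2 * M * frobNorm Et - s * (2 * M * α * (α + 1) * frobNorm Et)
      = s * M * frobNorm Et * (4 * α ^ 2 - 2 * α) := by ring
  linarith [hgoal, hgap]
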